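/- Let Γ, h, α, n, z_1, …, z_{n−1} and ϱ be as specified, and fix 0 ≤ k ≤ n−2. Define f : Γ → gl(n,ℂ) by f(γ) = Σ_{i=2}^{n} h_{n−i+1}(γ) E_i^{n−k}, and its coboundary δf(γ₁,γ₂) = ϱ(γ₁) f(γ₂) ϱ(γ₁)^{−1} − f(γ₁γ₂) + f(γ₁). Then for all γ₁, γ₂ ∈ Γ, the matrix δf(γ₁,γ₂) − (Σ_{i=1}^{n−1} z_i(γ₁) h_{n−i}(γ₂)) E_1^{n−k} has all entries in columns 1, …, n−k equal to zero; i.e. δf = (Σ_{i=1}^{n−1} z_i ⌣ h_{n−i}) E_1^{n−k} + x with x taking values in C(k−1) (interpreted as 0 when k = 0). -/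

import Mathlib

open Matrix LaurentPolynomial

noncomputable section

/-- Generalized binomial coefficient C(m,k) for m : ℤ, as a complex number. -/
def gbinom (m : ℤ) (k : ℕ) : ℂ :=
  (∏ i ∈ Finset.range k, ((m : ℂ) - i)) / (Nat.factorial k)

/-- The n×n nilpotent Jordan matrix N. -/
def Nmat (n : ℕ) : Matrix (Fin n) (Fin n) ℂ :=
  Matrix.of fun i j => if (i : ℕ) + 1 = (j : ℕ) then 1 else 0

/-- The unipotent Jordan block J = I + N. -/
def Jmat (n : ℕ) : Matrix (Fin n) (Fin n) ℂ := 1 + Nmat n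

lemma Jmat_blockTriangular (n : ℕ) : (Jmat n).BlockTriangular id := by
  intro i j hij
  have hji : (j : ℕ) < (i : ℕ) := hij
  simp only [Jmat, Matrix.add_apply, Matrix.one_apply, Nmat, Matrix.of_apply]
  rw [if_neg (by intro h; subst h; exact lt_irrefl _ hji), if_neg (by omega)]
  simp

lemma Jmat_isUnit (n : ℕ) : IsUnit (Jmat n) := by
  rw [Matrix.isUnit_iff_isUnit_det,
    Matrix.det_of_upperTriangular (Jmat_blockTriangular n)]
  have : ∀ i : Fin n, Jmat n i i = 1 := by
    intro i
    simp [Jmat, Matrix.one_apply, Nmat]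
  simp [this]

/-- Integer powers of the unipotent Jordan block. -/
def Jz (n : ℕ) (m : ℤ) : Matrix (Fin n) (Fin n) ℂ :=
  (((Jmat_isUnit n).unit ^ m : (Matrix (Fin n) (Fin n) ℂ)ˣ) : Matrix (Fin n) (Fin n) ℂ)

/-- The representation ϱ : Γ → GL(n,ℂ), with `ϱ(γ)_{1,1} = α^{h(γ)}`,
`ϱ(γ)_{1,j} = z_{j−1}(γ)` for `2 ≤ j ≤ n`, `ϱ(γ)_{i,1} = 0` for `2 ≤ i ≤ n`, and
`ϱ(γ)_{i,j} = (J_{n−1}^{h(γ)})_{i−1,j−1}` for `2 ≤ i, j ≤ n` (1-based indices). -/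
def rhoMat (Γ : Type*) (α : ℂ) (n : ℕ) (h : Γ → ℤ) (z : Γ → ℕ → ℂ) (γ : Γ) :
    Matrix (Fin n) (Fin n) ℂ :=
  Matrix.of fun i j =>
    if hi : (i : ℕ) = 0 then
      (if (j : ℕ) = 0 then α ^ h γ else z γ (j : ℕ))
    else
      (if hj : (j : ℕ) = 0 then 0
       else Jz (n - 1) (h γ) ⟨(i : ℕ) - 1, by have := i.isLt; omega⟩
              ⟨(j : ℕ) - 1, by have := j.isLt; omega⟩)

/-- The subspace `C(i)` of `gl(n,ℂ)` of matrices whose columns of 0-based index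
`< n−1−i` vanish. -/
def Csub (n i : ℕ) : Submodule ℂ (Matrix (Fin n) (Fin n) ℂ) where
  carrier := {X | ∀ a b : Fin n, (b : ℕ) < n - 1 - i → X a b = 0}
  add_mem' := by
    intro X Y hX hY a b hb
    simp [Matrix.add_apply, hX a b hb, hY a b hb]
  zero_mem' := by intro a b hb; rfl
  smul_mem' := by
    intro c X hX a b hb
    simp [Matrix.smul_apply, hX a b hb]

lemma stdBasisMatrix_mem_Csub (n k : ℕ) (i j : Fin n) (hj : n - 1 - k ≤ (j : ℕ)) :
    Matrix.single i j (1 : ℂ) ∈ Csub n k := by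
  intro a b hb
  have hjb : j ≠ b := by
    intro hjb
    subst hjb
    omega
  simp [Matrix.single, Matrix.of_apply]
  intro _ hcontra
  exact absurd hcontra hjb


open Finset in
lemma gbinom_eq_choose (m : ℤ) (k : ℕ) : gbinom m k = Ring.choose ((m : ℂ)) k := by
  have hprod : (Polynomial.eval ((m : ℂ)) (descPochhammer ℂ k)) =
      ∏ i ∈ range k, ((m : ℂ) - i) := by
    induction k with
    | zero => simp
    | succ k ih => rw [descPochhammer_succ_eval, ih, prod_range_succ]
  have h1 : (descPochhammer ℤ k).smeval ((m : ℂ)) = k.factorial • Ring.choose ((m : ℂ)) k :=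
    Ring.descPochhammer_eq_factorial_smul_choose _ _
  have h2 : (descPochhammer ℤ k).smeval ((m : ℂ)) = ∏ i ∈ range k, ((m : ℂ) - i) := by
    rw [← Polynomial.aeval_eq_smeval, Polynomial.aeval_def, Polynomial.eval₂_eq_eval_map,
      descPochhammer_map, hprod]
  rw [gbinom, ← h2, h1, nsmul_eq_mul,
    mul_div_cancel_left₀ _ (by exact_mod_cast Nat.factorial_ne_zero k)]

lemma gbinom_zero' (m : ℤ) : gbinom m 0 = 1 := by simp [gbinom]

lemma gbinom_zero_left {k : ℕ} (hk : k ≠ 0) : gbinom 0 k = 0 := by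
  rw [gbinom, Finset.prod_eq_zero (Finset.mem_range.mpr (Nat.pos_of_ne_zero hk)) (by simp)]
  simp

lemma gbinom_one_left {k : ℕ} (hk : 2 ≤ k) : gbinom 1 k = 0 := by
  rw [gbinom, Finset.prod_eq_zero (Finset.mem_range.mpr hk) (by norm_num)]
  simp

lemma gbinom_one_one : gbinom 1 1 = 1 := by simp [gbinom]

lemma gbinom_vandermonde (m₁ m₂ : ℤ) (t : ℕ) :
    gbinom (m₁ + m₂) t = ∑ s ∈ Finset.range (t + 1), gbinom m₁ s * gbinom m₂ (t - s) := by
  have := Ring.add_choose_eq (R := ℂ) (r := (m₁ : ℂ)) (s := (m₂ : ℂ)) t (Commute.all _ _)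
  rw [gbinom_eq_choose, Int.cast_add, this,
    Finset.Nat.sum_antidiagonal_eq_sum_range_succ
      (fun a b => Ring.choose ((m₁ : ℂ)) a * Ring.choose ((m₂ : ℂ)) b)]
  simp [gbinom_eq_choose]

/-- Closed form for integer powers of the Jordan block. -/
def Bmat (n : ℕ) (m : ℤ) : Matrix (Fin n) (Fin n) ℂ :=
  Matrix.of fun i j => if (i : ℕ) ≤ (j : ℕ) then gbinom m ((j : ℕ) - (i : ℕ)) else 0

lemma Bmat_zero (n : ℕ) : Bmat n 0 = 1 := by
  ext i j
  simp only [Bmat, Matrix.of_apply, Matrix.one_apply]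
  rcases eq_or_ne i j with rfl | hne
  · rw [if_pos le_rfl, Nat.sub_self, gbinom_zero', if_pos rfl]
  · rw [if_neg hne]
    by_cases hij : (i : ℕ) ≤ (j : ℕ)
    · rw [if_pos hij, gbinom_zero_left (by
        have : (i : ℕ) ≠ (j : ℕ) := fun hc => hne (Fin.ext hc)
        omega)]
    · rw [if_neg hij]

lemma Bmat_one (n : ℕ) : Bmat n 1 = Jmat n := by
  ext i j
  simp only [Bmat, Matrix.of_apply, Jmat, Matrix.add_apply, Matrix.one_apply, Nmat]
  by_cases hij : (i : ℕ) ≤ (j : ℕ)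
  · rw [if_pos hij]
    rcases eq_or_ne i j with rfl | hne
    · rw [Nat.sub_self, gbinom_zero', if_pos rfl, if_neg (by omega)]; norm_num
    · have hlt : (i : ℕ) < (j : ℕ) := lt_of_le_of_ne hij (fun hc => hne (Fin.ext hc))
      rw [if_neg hne]
      by_cases hsucc : (i : ℕ) + 1 = (j : ℕ)
      · rw [if_pos hsucc]
        have : (j : ℕ) - (i : ℕ) = 1 := by omega
        rw [this, gbinom_one_one]; norm_num
      · rw [if_neg hsucc, gbinom_one_left (by omega)]; norm_num
  · rw [if_neg hij, if_neg (fun hc => hij (le_of_eq (congrArg Fin.val hc))),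
      if_neg (by omega)]
    norm_num

open Finset in
lemma Bmat_mul (n : ℕ) (a b : ℤ) : Bmat n a * Bmat n b = Bmat n (a + b) := by
  ext i j
  rw [Matrix.mul_apply]
  simp only [Bmat, Matrix.of_apply]
  have hstep : ∀ r : Fin n,
      (if (i : ℕ) ≤ (r : ℕ) then gbinom a ((r : ℕ) - i) else 0) *
        (if (r : ℕ) ≤ (j : ℕ) then gbinom b ((j : ℕ) - r) else 0) =
      (fun t : ℕ => if (i : ℕ) ≤ t ∧ t ≤ (j : ℕ)
        then gbinom a (t - i) * gbinom b ((j : ℕ) - t) else 0) (r : ℕ) := by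
    intro r
    by_cases h1 : (i : ℕ) ≤ (r : ℕ) <;> by_cases h2 : (r : ℕ) ≤ (j : ℕ) <;>
      simp [h1, h2]
  rw [Finset.sum_congr rfl (fun r _ => hstep r),
    Fin.sum_univ_eq_sum_range (fun t : ℕ => if (i : ℕ) ≤ t ∧ t ≤ (j : ℕ)
      then gbinom a (t - i) * gbinom b ((j : ℕ) - t) else 0) n]
  by_cases hij : (i : ℕ) ≤ (j : ℕ)
  · rw [if_pos hij]
    rw [← Finset.sum_subset (s₁ := Finset.Icc (i : ℕ) (j : ℕ))
        (by intro t ht; simp only [Finset.mem_Icc] at ht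
            exact Finset.mem_range.mpr (by have := j.isLt; omega))
        (by intro t ht hnot; simp only [Finset.mem_Icc] at hnot
            rw [if_neg hnot])]
    rw [Finset.sum_congr rfl (fun t ht => by
      simp only [Finset.mem_Icc] at ht; rw [if_pos ht])]
    rw [← Finset.Ico_add_one_right_eq_Icc, Finset.sum_Ico_eq_sum_range]
    rw [gbinom_vandermonde]
    have hcount : (j : ℕ) + 1 - (i : ℕ) = ((j : ℕ) - (i : ℕ)) + 1 := by omega
    rw [hcount]
    refine Finset.sum_congr rfl (fun s hs => ?_)
    simp only [Finset.mem_range] at hs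
    have e1 : (i : ℕ) + s - (i : ℕ) = s := by omega
    have e2 : (j : ℕ) - ((i : ℕ) + s) = (j : ℕ) - (i : ℕ) - s := by omega
    rw [e1, e2]
  · rw [if_neg hij]
    refine Finset.sum_eq_zero (fun t _ => ?_)
    rw [if_neg (by omega)]

lemma Jz_zero (n : ℕ) : Jz n 0 = 1 := by simp [Jz]

lemma Jz_eq (n : ℕ) (m : ℤ) : Jz n m = Bmat n m := by
  set u := (Jmat_isUnit n).unit with hu
  have huval : (u : Matrix (Fin n) (Fin n) ℂ) = Jmat n := (Jmat_isUnit n).unit_spec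
  have hBJ : Bmat n (-1) * Jmat n = 1 := by
    rw [← Bmat_one, Bmat_mul]; norm_num; exact Bmat_zero n
  have huinv : ((u⁻¹ : _ˣ) : Matrix (Fin n) (Fin n) ℂ) = Bmat n (-1) := by
    calc ((u⁻¹ : _ˣ) : Matrix (Fin n) (Fin n) ℂ)
        = 1 * ((u⁻¹ : _ˣ) : Matrix (Fin n) (Fin n) ℂ) := (one_mul _).symm
      _ = (Bmat n (-1) * Jmat n) * ((u⁻¹ : _ˣ) : Matrix (Fin n) (Fin n) ℂ) := by rw [hBJ]
      _ = Bmat n (-1) * (Jmat n * ((u⁻¹ : _ˣ) : Matrix (Fin n) (Fin n) ℂ)) := by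
          rw [Matrix.mul_assoc]
      _ = Bmat n (-1) := by rw [← huval, u.mul_inv, Matrix.mul_one]
  induction m using Int.induction_on with
  | zero => simpa using (Jz_zero n).trans (Bmat_zero n).symm
  | succ m ih =>
      have : Jz n (m + 1) = Jz n m * Jmat n := by
        simp only [Jz]
        rw [_root_.zpow_add_one, Units.val_mul, huval]
      rw [this, ih, ← Bmat_one, Bmat_mul]
  | pred m ih =>
      have : Jz n (-m - 1) = Jz n (-m) * Bmat n (-1) := by
        simp only [Jz]
        rw [_root_.zpow_sub_one, Units.val_mul, huinv]
      rw [this, ih, Bmat_mul]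
      congr 1

lemma Jz_apply (n : ℕ) (m : ℤ) (i j : Fin n) :
    Jz n m i j = if (i : ℕ) ≤ (j : ℕ) then gbinom m ((j : ℕ) - (i : ℕ)) else 0 := by
  rw [Jz_eq]; rfl

lemma rho_apply {Γ : Type*} (α : ℂ) (n : ℕ) (h : Γ → ℤ) (z : Γ → ℕ → ℂ) (γ : Γ)
    (i j : Fin n) :
    rhoMat Γ α n h z γ i j =
      if (i : ℕ) = 0 then (if (j : ℕ) = 0 then α ^ h γ else z γ (j : ℕ))
      else if (j : ℕ) = 0 then 0
      else if (i : ℕ) ≤ (j : ℕ) then gbinom (h γ) ((j : ℕ) - (i : ℕ)) else 0 := by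
  simp only [rhoMat, Matrix.of_apply]
  by_cases hi : (i : ℕ) = 0
  · rw [dif_pos hi, if_pos hi]
  · rw [dif_neg hi, if_neg hi]
    by_cases hj : (j : ℕ) = 0
    · rw [dif_pos hj, if_pos hj]
    · rw [dif_neg hj, if_neg hj, Jz_apply]
      by_cases hij : (i : ℕ) ≤ (j : ℕ)
      · rw [if_pos (show ((⟨(i : ℕ) - 1, _⟩ : Fin (n - 1)) : ℕ) ≤
            ((⟨(j : ℕ) - 1, _⟩ : Fin (n - 1)) : ℕ) by simp; omega), if_pos hij]
        congr 1
        simp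
        omega
      · rw [if_neg (show ¬ ((⟨(i : ℕ) - 1, _⟩ : Fin (n - 1)) : ℕ) ≤
            ((⟨(j : ℕ) - 1, _⟩ : Fin (n - 1)) : ℕ) by simp; omega), if_neg hij]

lemma rho_mul {Γ : Type*} [Group Γ] (h : Γ → ℤ) (hh : ∀ a b : Γ, h (a * b) = h a + h b)
    (α : ℂ) (hα : α ≠ 0) (n : ℕ) (hn : 2 ≤ n) (z : Γ → ℕ → ℂ)
    (hz : ∀ k : ℕ, 1 ≤ k → k ≤ n - 1 → ∀ γ₁ γ₂ : Γ,
      z (γ₁ * γ₂) k = z γ₁ k + α ^ h γ₁ * z γ₂ k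
        + ∑ i ∈ Finset.Icc 1 (k - 1), z γ₁ i * gbinom (h γ₂) (k - i))
    (γ₁ γ₂ : Γ) :
    rhoMat Γ α n h z γ₁ * rhoMat Γ α n h z γ₂ = rhoMat Γ α n h z (γ₁ * γ₂) := by
  ext i j
  rw [Matrix.mul_apply]
  by_cases hi : (i : ℕ) = 0
  · by_cases hj : (j : ℕ) = 0
    · -- i = 0, j = 0
      rw [Finset.sum_eq_single (⟨0, by omega⟩ : Fin n)
        (fun r _ hne => by
          rw [rho_apply, rho_apply, if_pos hi]
          have hr : (r : ℕ) ≠ 0 := fun hc => hne (Fin.ext (by simpa using hc))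
          rw [if_neg hr, if_neg hr, if_pos hj, mul_zero])
        (fun habs => absurd (Finset.mem_univ _) habs)]
      rw [rho_apply, rho_apply, rho_apply, if_pos hi, if_pos hi, if_pos hj]
      rw [if_pos (show ((⟨0, by omega⟩ : Fin n) : ℕ) = 0 from rfl),
        if_pos (show ((⟨0, by omega⟩ : Fin n) : ℕ) = 0 from rfl), if_pos hj,
        hh, zpow_add₀ hα]
    · -- i = 0, j ≠ 0
      have hj1 : 1 ≤ (j : ℕ) := by omega
      have hjn : (j : ℕ) ≤ n - 1 := by have := j.isLt; omega
      have hsummand : ∀ r : Fin n,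
          rhoMat Γ α n h z γ₁ i r * rhoMat Γ α n h z γ₂ r j =
          (fun t : ℕ => if t = 0 then α ^ h γ₁ * z γ₂ (j : ℕ)
            else z γ₁ t * (if t ≤ (j : ℕ) then gbinom (h γ₂) ((j : ℕ) - t) else 0))
            (r : ℕ) := by
        intro r
        rw [rho_apply, rho_apply, if_pos hi]
        by_cases hr : (r : ℕ) = 0 <;> simp [hr, hj]
      rw [Finset.sum_congr rfl (fun r _ => hsummand r),
        Fin.sum_univ_eq_sum_range (fun t : ℕ => if t = 0 then α ^ h γ₁ * z γ₂ (j : ℕ)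
          else z γ₁ t * (if t ≤ (j : ℕ) then gbinom (h γ₂) ((j : ℕ) - t) else 0)) n]
      rw [Finset.sum_eq_sum_sdiff_singleton_add
        (Finset.mem_range.mpr (by omega : 0 < n)) _, if_pos rfl]
      have hrest : ∑ t ∈ Finset.range n \ {0},
          (if t = 0 then α ^ h γ₁ * z γ₂ (j : ℕ)
            else z γ₁ t * (if t ≤ (j : ℕ) then gbinom (h γ₂) ((j : ℕ) - t) else 0))
          = ∑ t ∈ Finset.Icc 1 (j : ℕ), z γ₁ t * gbinom (h γ₂) ((j : ℕ) - t) := by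
        rw [← Finset.sum_subset (s₁ := Finset.Icc 1 (j : ℕ))
          (by intro t ht
              simp only [Finset.mem_Icc] at ht
              simp only [Finset.mem_sdiff, Finset.mem_range, Finset.mem_singleton]
              omega)
          (by intro t ht hnot
              simp only [Finset.mem_sdiff, Finset.mem_range, Finset.mem_singleton] at ht
              simp only [Finset.mem_Icc] at hnot
              rw [if_neg ht.2, if_neg (by omega), mul_zero])]
        exact Finset.sum_congr rfl fun t ht => by
          simp only [Finset.mem_Icc] at ht
          rw [if_neg (by omega), if_pos (by omega)]
      rw [hrest]
      rw [rho_apply, if_pos hi, if_neg hj, hz (j : ℕ) hj1 hjn γ₁ γ₂]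
      have h' := Finset.insert_Icc_right_eq_Icc_add_one (a := 1) (b := (j : ℕ) - 1) (by omega)
      rw [show (j : ℕ) - 1 + 1 = (j : ℕ) from by omega] at h'
      rw [← h', Finset.sum_insert (by simp only [Finset.mem_Icc]; omega),
        Nat.sub_self, gbinom_zero', mul_one]
      ring
  · by_cases hj : (j : ℕ) = 0
    · -- i ≠ 0, j = 0
      rw [rho_apply, if_neg hi, if_pos hj]
      refine Finset.sum_eq_zero fun r _ => ?_
      rw [rho_apply, rho_apply, if_neg hi]
      by_cases hr : (r : ℕ) = 0
      · rw [if_pos hr, zero_mul]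
      · rw [if_neg hr, if_neg hr, if_pos hj, mul_zero]
    · -- i ≠ 0, j ≠ 0
      have hsummand : ∀ r : Fin n,
          rhoMat Γ α n h z γ₁ i r * rhoMat Γ α n h z γ₂ r j =
          Bmat n (h γ₁) i r * Bmat n (h γ₂) r j := by
        intro r
        rw [rho_apply, rho_apply, if_neg hi]
        simp only [Bmat, Matrix.of_apply]
        by_cases hr : (r : ℕ) = 0
        · rw [if_pos hr, if_neg (by omega : ¬ (i : ℕ) ≤ (r : ℕ)), zero_mul, zero_mul]
        · rw [if_neg hr, if_neg hr, if_neg hj]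
      rw [Finset.sum_congr rfl (fun r _ => hsummand r), ← Matrix.mul_apply, Bmat_mul]
      rw [rho_apply, if_neg hi, if_neg hj, hh]
      rfl

lemma rho_one {Γ : Type*} [Group Γ] (h : Γ → ℤ) (hh : ∀ a b : Γ, h (a * b) = h a + h b)
    (α : ℂ) (hα : α ≠ 0) (n : ℕ) (hn : 2 ≤ n) (z : Γ → ℕ → ℂ)
    (hz : ∀ k : ℕ, 1 ≤ k → k ≤ n - 1 → ∀ γ₁ γ₂ : Γ,
      z (γ₁ * γ₂) k = z γ₁ k + α ^ h γ₁ * z γ₂ k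
        + ∑ i ∈ Finset.Icc 1 (k - 1), z γ₁ i * gbinom (h γ₂) (k - i)) :
    rhoMat Γ α n h z 1 = 1 := by
  have h1 : h 1 = 0 := by
    have := hh 1 1
    rw [one_mul] at this
    omega
  have z1 : ∀ j : ℕ, 1 ≤ j → j ≤ n - 1 → z 1 j = 0 := by
    intro j hj1 hjn
    have := hz j hj1 hjn 1 1
    rw [one_mul, h1, zpow_zero, one_mul] at this
    have hzero : ∑ i ∈ Finset.Icc 1 (j - 1), z 1 i * gbinom 0 (j - i) = 0 := by
      refine Finset.sum_eq_zero fun i hi => ?_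
      simp only [Finset.mem_Icc] at hi
      rw [gbinom_zero_left (by omega), mul_zero]
    rw [hzero, add_zero] at this
    linear_combination -this
  ext i j
  rw [rho_apply, Matrix.one_apply]
  by_cases hi : (i : ℕ) = 0
  · rw [if_pos hi]
    by_cases hj : (j : ℕ) = 0
    · rw [if_pos hj, if_pos (Fin.ext (by omega) : i = j), h1, zpow_zero]
    · rw [if_neg hj, if_neg (fun hc : i = j => hj (by rw [← hc]; exact hi)),
        z1 (j : ℕ) (by omega) (by have := j.isLt; omega)]
  · rw [if_neg hi]
    by_cases hj : (j : ℕ) = 0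
    · rw [if_pos hj, if_neg (fun hc : i = j => hi (by rw [hc]; exact hj))]
    · rw [if_neg hj]
      rcases eq_or_ne i j with rfl | hne
      · rw [if_pos le_rfl, Nat.sub_self, h1, gbinom_zero', if_pos rfl]
      · rw [if_neg hne]
        by_cases hij : (i : ℕ) ≤ (j : ℕ)
        · rw [if_pos hij, h1, gbinom_zero_left
            (by have : (i : ℕ) ≠ (j : ℕ) := fun hc => hne (Fin.ext hc); omega)]
        · rw [if_neg hij]


/-- The cochain `f(γ) = Σ_{i=2}^{n} h_{n−i+1}(γ) E_i^{n−k}` (here the row index is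
0-based: the 0-based row `r = i−1` ranges over `1,…,n−1` and carries the coefficient
`h_{n−r}(γ) = C(h(γ), n−r)`; the column `n−k` is 0-based index `n−1−k`). -/

def fcochain (Γ : Type*) (h : Γ → ℤ) (n k : ℕ) (hkn : k + 1 ≤ n) (γ : Γ) :
    Matrix (Fin n) (Fin n) ℂ :=
  ∑ r : Fin n,
    (if (r : ℕ) = 0 then 0 else gbinom (h γ) (n - (r : ℕ)))
      • Matrix.single r (⟨n - 1 - k, by omega⟩ : Fin n) (1 : ℂ)

lemma fcochain_apply {Γ : Type*} (h : Γ → ℤ) (n k : ℕ) (hkn : k + 1 ≤ n) (γ : Γ)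
    (a b : Fin n) :
    fcochain Γ h n k hkn γ a b =
      if (a : ℕ) ≠ 0 ∧ (b : ℕ) = n - 1 - k then gbinom (h γ) (n - (a : ℕ)) else 0 := by
  rw [fcochain, Matrix.sum_apply]
  have hsb : ∀ (r c : Fin n), Matrix.single r c (1 : ℂ) a b =
      if r = a ∧ c = b then 1 else 0 := fun r c => rfl
  have hterm : ∀ r : Fin n,
      ((if (r : ℕ) = 0 then 0 else gbinom (h γ) (n - (r : ℕ)))
        • Matrix.single r (⟨n - 1 - k, by omega⟩ : Fin n) (1 : ℂ)) a b
      = if r = a then (if (a : ℕ) ≠ 0 ∧ (b : ℕ) = n - 1 - k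
          then gbinom (h γ) (n - (a : ℕ)) else 0) else 0 := by
    intro r
    rw [Matrix.smul_apply, hsb, smul_eq_mul]
    by_cases hra : r = a
    · subst hra
      by_cases hbv : (b : ℕ) = n - 1 - k
      · have hcb : (⟨n - 1 - k, by omega⟩ : Fin n) = b := Fin.ext (by simp [hbv])
        by_cases ha : (r : ℕ) = 0 <;> simp [hcb, hbv, ha]
      · have hcb : ¬ ((⟨n - 1 - k, by omega⟩ : Fin n) = b) :=
          fun hc => hbv (by simpa using (congrArg Fin.val hc).symm)
        simp [hcb, hbv]
    · simp [hra]
  rw [Finset.sum_congr rfl fun r _ => hterm r,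
    Finset.sum_ite_eq' Finset.univ a
      (fun _ => if (a : ℕ) ≠ 0 ∧ (b : ℕ) = n - 1 - k
        then gbinom (h γ) (n - (a : ℕ)) else 0),
    if_pos (Finset.mem_univ a)]

/-- With `δf(γ₁,γ₂) = ϱ(γ₁) f(γ₂) ϱ(γ₁)⁻¹ − f(γ₁γ₂) + f(γ₁)`, the matrix
`δf(γ₁,γ₂) − (Σ_{i=1}^{n−1} z_i(γ₁) h_{n−i}(γ₂)) E₁^{n−k}` has all entries in the
(1-based) columns `1, …, n−k` equal to zero; i.e. `δf = (Σ z_i ⌣ h_{n−i}) E₁^{n−k} + x`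
with `x` taking values in `C(k−1)`. -/
theorem stmt13 (Γ : Type*) [Group Γ] (h : Γ → ℤ)
    (hh : ∀ a b : Γ, h (a * b) = h a + h b)
    (α : ℂ) (hα : α ≠ 0) (n : ℕ) (hn : 2 ≤ n) (z : Γ → ℕ → ℂ)
    (hz : ∀ k : ℕ, 1 ≤ k → k ≤ n - 1 → ∀ γ₁ γ₂ : Γ,
      z (γ₁ * γ₂) k = z γ₁ k + α ^ h γ₁ * z γ₂ k
        + ∑ i ∈ Finset.Icc 1 (k - 1), z γ₁ i * gbinom (h γ₂) (k - i))
    (k : ℕ) (hk : k ≤ n - 2) :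
    ∀ γ₁ γ₂ : Γ, ∀ a b : Fin n, (b : ℕ) < n - k →
      (rhoMat Γ α n h z γ₁ * fcochain Γ h n k (by omega) γ₂
          * (rhoMat Γ α n h z γ₁)⁻¹
        - fcochain Γ h n k (by omega) (γ₁ * γ₂)
        + fcochain Γ h n k (by omega) γ₁
        - (∑ i ∈ Finset.Icc 1 (n - 1), z γ₁ i * gbinom (h γ₂) (n - i))
            • Matrix.single (⟨0, by omega⟩ : Fin n)
                (⟨n - 1 - k, by omega⟩ : Fin n) (1 : ℂ)) a b = 0 := by
  intro γ₁ γ₂ a b hb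
  have hkn : k + 1 ≤ n := by omega
  have hc1 : 1 ≤ n - 1 - k := by omega
  set c0 : Fin n := ⟨n - 1 - k, by omega⟩ with hc0
  have hc0v : (c0 : ℕ) = n - 1 - k := rfl
  have h1 : h 1 = 0 := by have := hh 1 1; rw [one_mul] at this; omega
  have hinvh : h γ₁⁻¹ = - h γ₁ := by
    have := hh γ₁ γ₁⁻¹
    rw [mul_inv_cancel, h1] at this
    omega
  have hrinv : (rhoMat Γ α n h z γ₁)⁻¹ = rhoMat Γ α n h z γ₁⁻¹ := by
    refine Matrix.inv_eq_right_inv ?_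
    rw [rho_mul h hh α hα n hn z hz, mul_inv_cancel, rho_one h hh α hα n hn z hz]
  rw [hrinv]
  simp only [Matrix.sub_apply, Matrix.add_apply, Matrix.smul_apply, smul_eq_mul]
  set T : ℂ := ∑ r : Fin n, rhoMat Γ α n h z γ₁ a r *
      (if (r : ℕ) ≠ 0 then gbinom (h γ₂) (n - (r : ℕ)) else 0) with hT
  have hM : ∀ jj : Fin n,
      (rhoMat Γ α n h z γ₁ * fcochain Γ h n k (by omega) γ₂) a jj =
      if (jj : ℕ) = n - 1 - k then T else 0 := by
    intro jj
    rw [Matrix.mul_apply]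
    by_cases hjj : (jj : ℕ) = n - 1 - k
    · rw [if_pos hjj, hT]
      refine Finset.sum_congr rfl fun r _ => ?_
      rw [fcochain_apply]
      by_cases hr : (r : ℕ) = 0
      · rw [if_neg (by tauto), if_neg (by tauto)]
      · rw [if_pos ⟨hr, hjj⟩, if_pos hr]
    · rw [if_neg hjj]
      refine Finset.sum_eq_zero fun r _ => ?_
      rw [fcochain_apply, if_neg (by tauto), mul_zero]
  have hMP : (rhoMat Γ α n h z γ₁ * fcochain Γ h n k (by omega) γ₂ *
      rhoMat Γ α n h z γ₁⁻¹) a b = T * rhoMat Γ α n h z γ₁⁻¹ c0 b := by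
    rw [Matrix.mul_apply]
    rw [Finset.sum_eq_single c0
      (fun jj _ hne => by
        rw [hM jj, if_neg (fun hc => hne (Fin.ext (hc.trans hc0v.symm))), zero_mul])
      (fun habs => absurd (Finset.mem_univ _) habs)]
    rw [hM c0, if_pos (show (c0 : ℕ) = n - 1 - k from rfl)]
  rw [hMP]
  by_cases hbc : (b : ℕ) = n - 1 - k
  · -- b is the special column
    have hb0 : (b : ℕ) ≠ 0 := by omega
    have hinv1 : rhoMat Γ α n h z γ₁⁻¹ c0 b = 1 := by
      rw [rho_apply, if_neg (show (c0 : ℕ) ≠ 0 by rw [hc0v]; omega), if_neg hb0,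
        if_pos (show (c0 : ℕ) ≤ (b : ℕ) by rw [hc0v]; omega),
        show (b : ℕ) - (c0 : ℕ) = 0 by rw [hc0v]; omega, gbinom_zero']
    rw [hinv1, mul_one]
    by_cases ha : (a : ℕ) = 0
    · -- first row
      have hstd : Matrix.single (⟨0, by omega⟩ : Fin n)
          (⟨n - 1 - k, by omega⟩ : Fin n) (1 : ℂ) a b = 1 := by
        simp only [Matrix.single, Matrix.of_apply]
        rw [if_pos ⟨Fin.ext (by simpa using ha.symm), Fin.ext (by simpa using hbc.symm)⟩]
      rw [hstd, fcochain_apply, fcochain_apply, if_neg (by tauto), if_neg (by tauto),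
        mul_one]
      have hTS : T = ∑ i ∈ Finset.Icc 1 (n - 1), z γ₁ i * gbinom (h γ₂) (n - i) := by
        rw [hT]
        have hsummand : ∀ r : Fin n,
            rhoMat Γ α n h z γ₁ a r *
              (if (r : ℕ) ≠ 0 then gbinom (h γ₂) (n - (r : ℕ)) else 0) =
            (fun t : ℕ => if t = 0 then 0 else z γ₁ t * gbinom (h γ₂) (n - t))
              (r : ℕ) := by
          intro r
          rw [rho_apply, if_pos ha]
          by_cases hr : (r : ℕ) = 0 <;> simp [hr]
        rw [Finset.sum_congr rfl (fun r _ => hsummand r),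
          Fin.sum_univ_eq_sum_range
            (fun t : ℕ => if t = 0 then 0 else z γ₁ t * gbinom (h γ₂) (n - t)) n]
        rw [← Finset.sum_subset (s₁ := Finset.Icc 1 (n - 1))
          (by intro t ht
              simp only [Finset.mem_Icc] at ht
              exact Finset.mem_range.mpr (by omega))
          (by intro t ht hnot
              simp only [Finset.mem_range] at ht
              simp only [Finset.mem_Icc] at hnot
              rw [if_pos (by omega : t = 0)])]
        exact Finset.sum_congr rfl fun t ht => by
          simp only [Finset.mem_Icc] at ht
          rw [if_neg (by omega)]
      rw [hTS]
      ring
    · -- lower rows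
      have hstd : Matrix.single (⟨0, by omega⟩ : Fin n)
          (⟨n - 1 - k, by omega⟩ : Fin n) (1 : ℂ) a b = 0 := by
        simp only [Matrix.single, Matrix.of_apply]
        rw [if_neg (fun hc => ha (by simpa using (congrArg Fin.val hc.1).symm))]
      rw [hstd, mul_zero, fcochain_apply, fcochain_apply, if_pos ⟨ha, hbc⟩,
        if_pos ⟨ha, hbc⟩, hh]
      have ha1 : 1 ≤ (a : ℕ) := by omega
      have han : (a : ℕ) ≤ n - 1 := by have := a.isLt; omega
      have hTval : T = gbinom (h γ₁ + h γ₂) (n - (a : ℕ)) -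
          gbinom (h γ₁) (n - (a : ℕ)) := by
        rw [hT]
        have hsummand : ∀ r : Fin n,
            rhoMat Γ α n h z γ₁ a r *
              (if (r : ℕ) ≠ 0 then gbinom (h γ₂) (n - (r : ℕ)) else 0) =
            (fun t : ℕ => if (a : ℕ) ≤ t
              then gbinom (h γ₁) (t - (a : ℕ)) * gbinom (h γ₂) (n - t) else 0)
              (r : ℕ) := by
          intro r
          rw [rho_apply, if_neg ha]
          by_cases hr : (r : ℕ) = 0
          · have hna : ¬ (a : ℕ) ≤ (r : ℕ) := by omega
            simp [hr, hna, ha]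
          · by_cases har : (a : ℕ) ≤ (r : ℕ) <;> simp [hr, har]
        rw [Finset.sum_congr rfl (fun r _ => hsummand r),
          Fin.sum_univ_eq_sum_range
            (fun t : ℕ => if (a : ℕ) ≤ t
              then gbinom (h γ₁) (t - (a : ℕ)) * gbinom (h γ₂) (n - t) else 0) n]
        rw [← Finset.sum_subset (s₁ := Finset.Icc (a : ℕ) (n - 1))
          (by intro t ht
              simp only [Finset.mem_Icc] at ht
              exact Finset.mem_range.mpr (by omega))
          (by intro t ht hnot
              simp only [Finset.mem_range] at ht
              simp only [Finset.mem_Icc] at hnot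
              rw [if_neg (by omega)])]
        rw [Finset.sum_congr rfl (fun t ht => by
          simp only [Finset.mem_Icc] at ht
          rw [if_pos ht.1])]
        rw [← Finset.Ico_add_one_right_eq_Icc, Finset.sum_Ico_eq_sum_range]
        have hcount : n - 1 + 1 - (a : ℕ) = n - (a : ℕ) := by omega
        rw [hcount]
        have hterm : ∀ s ∈ Finset.range (n - (a : ℕ)),
            gbinom (h γ₁) ((a : ℕ) + s - (a : ℕ)) * gbinom (h γ₂) (n - ((a : ℕ) + s)) =
            gbinom (h γ₁) s * gbinom (h γ₂) (n - (a : ℕ) - s) := by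
          intro s hs
          simp only [Finset.mem_range] at hs
          rw [show (a : ℕ) + s - (a : ℕ) = s from by omega,
            show n - ((a : ℕ) + s) = n - (a : ℕ) - s from by omega]
        rw [Finset.sum_congr rfl hterm]
        have hvan := gbinom_vandermonde (h γ₁) (h γ₂) (n - (a : ℕ))
        rw [Finset.sum_range_succ, Nat.sub_self, gbinom_zero', mul_one] at hvan
        rw [hvan]
        ring
      rw [hTval]
      ring
  · -- b strictly left of the special column
    have hbc' : (b : ℕ) < n - 1 - k := by omega
    have hinv0 : rhoMat Γ α n h z γ₁⁻¹ c0 b = 0 := by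
      rw [rho_apply, if_neg (show (c0 : ℕ) ≠ 0 by rw [hc0v]; omega)]
      by_cases hb0 : (b : ℕ) = 0
      · rw [if_pos hb0]
      · rw [if_neg hb0, if_neg (show ¬ (c0 : ℕ) ≤ (b : ℕ) by rw [hc0v]; omega)]
    have hstd : Matrix.single (⟨0, by omega⟩ : Fin n)
        (⟨n - 1 - k, by omega⟩ : Fin n) (1 : ℂ) a b = 0 := by
      simp only [Matrix.single, Matrix.of_apply]
      rw [if_neg (fun hc => hbc (by simpa using (congrArg Fin.val hc.2).symm))]
    rw [hinv0, mul_zero, hstd, mul_zero, fcochain_apply, fcochain_apply,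
      if_neg (by tauto), if_neg (by tauto)]
    ring


end
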